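/- Let (ν_l) be probability measures on (X,𝒜), and R_l : X → 𝔈, R'_l : X → 𝔈' Borel maps into compact metric spaces. Suppose (R_l, R'_l) converges in distribution under ν_l to a random element (R, R') of 𝔈 × 𝔈'. Assume there is a π-system ℬ^π generating the Borel σ-algebra of 𝔈 such that Pr[R ∈ ∂E] = 0 for all E ∈ ℬ^π, and whenever Pr[R ∈ E] > 0 the conditional laws satisfy R'_l ⟹ R' under (ν_l) conditioned on {R_l ∈ E}. Then R and R' are independent. -/

import Mathlib

open MeasureTheory ProbabilityTheory Filter Topology Set

open scoped ENNReal NNReal BoundedContinuousFunction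
set_option linter.unusedSectionVars false

section auxdefs

variable {Y E E' : Type*} [MeasurableSpace Y]
    [MetricSpace E] [CompactSpace E] [MeasurableSpace E] [BorelSpace E]
    [MetricSpace E'] [CompactSpace E'] [MeasurableSpace E'] [BorelSpace E']

/-- auxiliary measure: pushforward under `r` of `μ` weighted by `g ∘ r'`. -/
noncomputable def auxMeas (μ : Measure Y) (r : Y → E) (r' : Y → E') (g : E' → ℝ) : Measure E :=
  (μ.withDensity (fun y => ENNReal.ofReal (g (r' y)))).map r

lemma auxMeas_apply (μ : Measure Y) {r : Y → E} (r' : Y → E') (g : E' → ℝ)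
    (hr : Measurable r) {A : Set E} (hA : MeasurableSet A) :
    auxMeas μ r r' g A = ∫⁻ y in r ⁻¹' A, ENNReal.ofReal (g (r' y)) ∂μ := by
  rw [auxMeas, Measure.map_apply hr hA, withDensity_apply _ (hr hA)]

lemma auxMeas_apply_toReal (μ : Measure Y) {r : Y → E} {r' : Y → E'} {g : E' → ℝ}
    (hr : Measurable r) (hr' : Measurable r') (hgc : Continuous g) (hg0 : ∀ y, 0 ≤ g y)
    {A : Set E} (hA : MeasurableSet A) :
    (auxMeas μ r r' g A).toReal = ∫ y in r ⁻¹' A, g (r' y) ∂μ := by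
  rw [integral_eq_lintegral_of_nonneg_ae (Eventually.of_forall fun y => hg0 _)
      ((hgc.measurable.comp hr').aestronglyMeasurable),
    auxMeas_apply μ r' g hr hA]

lemma auxMeas_integral (μ : Measure Y) {r : Y → E} {r' : Y → E'} {g : E' → ℝ}
    (hr : Measurable r) (hr' : Measurable r') (hgc : Continuous g) (hg0 : ∀ y, 0 ≤ g y)
    {f : E → ℝ} (hf : Continuous f) :
    ∫ x, f x ∂(auxMeas μ r r' g) = ∫ y, g (r' y) * f (r y) ∂μ := by
  rw [auxMeas, integral_map hr.aemeasurable hf.aestronglyMeasurable]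
  have hd : Measurable (fun y => (g (r' y)).toNNReal) :=
    (hgc.measurable.comp hr').real_toNNReal
  have : (fun y => ENNReal.ofReal (g (r' y)))
      = fun y => ((g (r' y)).toNNReal : ℝ≥0∞) := rfl
  rw [this, integral_withDensity_eq_integral_smul hd]
  congr 1
  ext y
  rw [NNReal.smul_def, Real.coe_toNNReal _ (hg0 _), smul_eq_mul]

lemma auxMeas_mass_le (μ : Measure Y) [IsProbabilityMeasure μ] {r : Y → E} (r' : Y → E')
    {g : E' → ℝ} (hr : Measurable r) (hg1 : ∀ y, g y ≤ 1) :
    auxMeas μ r r' g univ ≤ 1 := by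
  rw [auxMeas_apply μ r' g hr MeasurableSet.univ, preimage_univ, Measure.restrict_univ]
  calc ∫⁻ y, ENNReal.ofReal (g (r' y)) ∂μ ≤ ∫⁻ _, 1 ∂μ :=
        lintegral_mono fun y => ENNReal.ofReal_le_one.mpr (hg1 _)
    _ = 1 := by simp

lemma auxMeas_mass_ge (μ : Measure Y) [IsProbabilityMeasure μ] {r : Y → E} (r' : Y → E')
    {g : E' → ℝ} (hr : Measurable r) (hg : ∀ y, (1:ℝ)/2 ≤ g y) :
    ENNReal.ofReal (1/2) ≤ auxMeas μ r r' g univ := by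
  rw [auxMeas_apply μ r' g hr MeasurableSet.univ, preimage_univ, Measure.restrict_univ]
  calc ENNReal.ofReal (1/2) = ∫⁻ _, ENNReal.ofReal (1/2) ∂μ := by simp
    _ ≤ ∫⁻ y, ENNReal.ofReal (g (r' y)) ∂μ :=
        lintegral_mono fun y => ENNReal.ofReal_le_ofReal (hg _)

end auxdefs

lemma aux_key {X E E' Ω : Type*} [MeasurableSpace X]
    [MetricSpace E] [CompactSpace E] [MeasurableSpace E] [BorelSpace E]
    [MetricSpace E'] [CompactSpace E'] [MeasurableSpace E'] [BorelSpace E']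
    [MeasurableSpace Ω] (P : Measure Ω) [IsProbabilityMeasure P]
    (ν : ℕ → Measure X) (hν : ∀ l, IsProbabilityMeasure (ν l))
    (Rl : ℕ → X → E) (R'l : ℕ → X → E')
    (hRl : ∀ l, Measurable (Rl l)) (hR'l : ∀ l, Measurable (R'l l))
    (R : Ω → E) (R' : Ω → E') (hR : Measurable R) (hR' : Measurable R')
    (hconv : ∀ f : C(E × E', ℝ),
      Tendsto (fun l => ∫ x, f (Rl l x, R'l l x) ∂(ν l)) atTop
        (𝓝 (∫ ω, f (R ω, R' ω) ∂P)))
    (g : C(E', ℝ)) (hg1 : ∀ y, (1:ℝ)/2 ≤ g y) (hg2 : ∀ y, g y ≤ 1)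
    {s : Set E} (hs : MeasurableSet s) (hfront : P (R ⁻¹' frontier s) = 0) :
    Tendsto (fun l => ∫ x in (Rl l) ⁻¹' s, g (R'l l x) ∂(ν l)) atTop
      (𝓝 (∫ ω in R ⁻¹' s, g (R' ω) ∂P)) := by
  have hg0 : ∀ y, 0 ≤ g y := fun y => le_trans (by norm_num) (hg1 y)
  set κl : ℕ → Measure E := fun l => auxMeas (ν l) (Rl l) (R'l l) g with hκl
  set κ : Measure E := auxMeas P R R' g with hκ
  have hmlge : ∀ l, ENNReal.ofReal (1/2) ≤ κl l univ := fun l => by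
    haveI := hν l; exact auxMeas_mass_ge (ν l) (R'l l) (hRl l) hg1
  have hmlle : ∀ l, κl l univ ≤ 1 := fun l => by
    haveI := hν l; exact auxMeas_mass_le (ν l) (R'l l) (hRl l) hg2
  have hmge : ENNReal.ofReal (1/2) ≤ κ univ := auxMeas_mass_ge P R' hR hg1
  have hmle : κ univ ≤ 1 := auxMeas_mass_le P R' hR hg2
  have hhalf : (0:ℝ≥0∞) < ENNReal.ofReal (1/2) := ENNReal.ofReal_pos.mpr (by norm_num)
  have hml0 : ∀ l, κl l univ ≠ 0 := fun l => (lt_of_lt_of_le hhalf (hmlge l)).ne'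
  have hmltop : ∀ l, κl l univ ≠ ⊤ := fun l =>
    (lt_of_le_of_lt (hmlle l) ENNReal.one_lt_top).ne
  have hm0 : κ univ ≠ 0 := (lt_of_lt_of_le hhalf hmge).ne'
  have hmtop : κ univ ≠ ⊤ := (lt_of_le_of_lt hmle ENNReal.one_lt_top).ne
  have hweak : ∀ f : E →ᵇ ℝ,
      Tendsto (fun l => ∫ x, f x ∂(κl l)) atTop (𝓝 (∫ x, f x ∂κ)) := by
    intro f
    have hF : Continuous fun p : E × E' => g p.2 * f p.1 :=
      (g.continuous.comp continuous_snd).mul (f.continuous.comp continuous_fst)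
    have h := hconv ⟨fun p => g p.2 * f p.1, hF⟩
    simp only [ContinuousMap.coe_mk] at h
    have e1 : ∀ l, ∫ x, f x ∂(κl l) = ∫ x, g (R'l l x) * f (Rl l x) ∂(ν l) := fun l =>
      auxMeas_integral (ν l) (hRl l) (hR'l l) g.continuous hg0 f.continuous
    have e2 : ∫ x, f x ∂κ = ∫ ω, g (R' ω) * f (R ω) ∂P :=
      auxMeas_integral P hR hR' g.continuous hg0 f.continuous
    rw [e2]
    exact h.congr fun l => (e1 l).symm
  have hmass : Tendsto (fun l => (κl l univ).toReal) atTop (𝓝 ((κ univ).toReal)) := by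
    have := hweak (BoundedContinuousFunction.const E (1:ℝ))
    simpa [integral_const, measureReal_def] using this
  set ρl : ℕ → ProbabilityMeasure E := fun l =>
    ⟨(κl l univ)⁻¹ • κl l, ⟨by
      rw [Measure.smul_apply, smul_eq_mul, ENNReal.inv_mul_cancel (hml0 l) (hmltop l)]⟩⟩
    with hρl
  set ρ : ProbabilityMeasure E :=
    ⟨(κ univ)⁻¹ • κ, ⟨by
      rw [Measure.smul_apply, smul_eq_mul, ENNReal.inv_mul_cancel hm0 hmtop]⟩⟩ with hρ
  have hmR0 : (κ univ).toReal ≠ 0 := ENNReal.toReal_ne_zero.mpr ⟨hm0, hmtop⟩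
  have hmlR0 : ∀ l, (κl l univ).toReal ≠ 0 := fun l =>
    ENNReal.toReal_ne_zero.mpr ⟨hml0 l, hmltop l⟩
  have hρweak : Tendsto ρl atTop (𝓝 ρ) := by
    rw [ProbabilityMeasure.tendsto_iff_forall_integral_tendsto]
    intro f
    have e1 : ∀ l, ∫ ω, f ω ∂(ρl l : Measure E)
        = ((κl l univ).toReal)⁻¹ * ∫ ω, f ω ∂(κl l) := by
      intro l
      show ∫ ω, f ω ∂((κl l univ)⁻¹ • κl l) = _
      rw [integral_smul_measure, ENNReal.toReal_inv, smul_eq_mul]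
    have e2 : ∫ ω, f ω ∂(ρ : Measure E) = ((κ univ).toReal)⁻¹ * ∫ ω, f ω ∂κ := by
      show ∫ ω, f ω ∂((κ univ)⁻¹ • κ) = _
      rw [integral_smul_measure, ENNReal.toReal_inv, smul_eq_mul]
    rw [e2]
    exact ((hmass.inv₀ hmR0).mul (hweak f)).congr fun l => (e1 l).symm
  have hρfront : (ρ : Measure E) (frontier s) = 0 := by
    have hκfront : κ (frontier s) = 0 := by
      have hle : κ (frontier s) ≤ P (R ⁻¹' frontier s) := by
        rw [hκ, auxMeas_apply P R' g hR isClosed_frontier.measurableSet]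
        calc ∫⁻ ω in R ⁻¹' frontier s, ENNReal.ofReal (g (R' ω)) ∂P
            ≤ ∫⁻ _ in R ⁻¹' frontier s, 1 ∂P :=
              lintegral_mono fun ω => ENNReal.ofReal_le_one.mpr (hg2 _)
          _ = P (R ⁻¹' frontier s) := setLIntegral_one _
      exact le_antisymm (hfront ▸ hle) zero_le
    show ((κ univ)⁻¹ • κ) (frontier s) = 0
    rw [Measure.smul_apply, hκfront, smul_zero]
  have hsets := ProbabilityMeasure.tendsto_measure_of_null_frontier_of_tendsto' hρweak hρfront
  have hsetsR : Tendsto (fun l => ((ρl l : Measure E) s).toReal) atTop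
      (𝓝 (((ρ : Measure E) s).toReal)) :=
    (ENNReal.tendsto_toReal (measure_ne_top _ _)).comp hsets
  have hfin : Tendsto (fun l => (κl l univ).toReal * ((ρl l : Measure E) s).toReal) atTop
      (𝓝 ((κ univ).toReal * ((ρ : Measure E) s).toReal)) := hmass.mul hsetsR
  have hid : ∀ l, (κl l univ).toReal * ((ρl l : Measure E) s).toReal = (κl l s).toReal := by
    intro l
    show (κl l univ).toReal * (((κl l univ)⁻¹ • κl l) s).toReal = _
    rw [Measure.smul_apply, smul_eq_mul, ENNReal.toReal_mul, ENNReal.toReal_inv,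
      mul_inv_cancel_left₀ (hmlR0 l)]
  have hid2 : (κ univ).toReal * ((ρ : Measure E) s).toReal = (κ s).toReal := by
    show (κ univ).toReal * (((κ univ)⁻¹ • κ) s).toReal = _
    rw [Measure.smul_apply, smul_eq_mul, ENNReal.toReal_mul, ENNReal.toReal_inv,
      mul_inv_cancel_left₀ hmR0]
  rw [← auxMeas_apply_toReal P hR hR' g.continuous hg0 hs, ← hκ, ← hid2]
  refine hfin.congr fun l => ?_
  rw [hid l]
  exact auxMeas_apply_toReal (ν l) (hRl l) (hR'l l) g.continuous hg0 hs


/-- Independence of limit variables by conditioning: if `(R_l, R'_l) ⟹ (R, R')` under `ν_l`,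
and there is a generating π-system of `R`-continuity sets `E` such that conditioning `ν_l` on
`{R_l ∈ E}` still yields `R'_l ⟹ R'` whenever `Pr[R ∈ E] > 0`, then `R` and `R'` are
independent. -/
theorem stmt10 {X E E' Ω : Type*} [MeasurableSpace X]
    [MetricSpace E] [CompactSpace E] [MeasurableSpace E] [BorelSpace E]
    [MetricSpace E'] [CompactSpace E'] [MeasurableSpace E'] [BorelSpace E']
    [MeasurableSpace Ω] (P : Measure Ω) [IsProbabilityMeasure P]
    (ν : ℕ → Measure X) (hν : ∀ l, IsProbabilityMeasure (ν l))
    (Rl : ℕ → X → E) (R'l : ℕ → X → E')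
    (hRl : ∀ l, Measurable (Rl l)) (hR'l : ∀ l, Measurable (R'l l))
    (R : Ω → E) (R' : Ω → E') (hR : Measurable R) (hR' : Measurable R')
    (hconv : ∀ f : C(E × E', ℝ),
      Tendsto (fun l => ∫ x, f (Rl l x, R'l l x) ∂(ν l)) atTop
        (𝓝 (∫ ω, f (R ω, R' ω) ∂P)))
    (piSys : Set (Set E)) (hπ : IsPiSystem piSys)
    (hgen : MeasurableSpace.generateFrom piSys = (inferInstance : MeasurableSpace E))
    (hbdry : ∀ s ∈ piSys, P (R ⁻¹' frontier s) = 0)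
    (hcond : ∀ s ∈ piSys, P (R ⁻¹' s) ≠ 0 → ∀ g : C(E', ℝ),
      Tendsto (fun l => ∫ x, g (R'l l x) ∂((ν l)[|{x | Rl l x ∈ s}])) atTop
        (𝓝 (∫ ω, g (R' ω) ∂P))) :
    IndepFun R R' P := by
  have hint : ∀ g : C(E', ℝ), Integrable (fun ω => g (R' ω)) P := by
    intro g
    exact ⟨(g.continuous.measurable.comp hR').aestronglyMeasurable,
      HasFiniteIntegral.of_bounded (C := ‖g‖)
        (Eventually.of_forall fun ω => g.norm_coe_le_norm _)⟩
  have hmeas : ∀ s ∈ piSys, MeasurableSet s := by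
    intro s hs
    have h : MeasurableSet[MeasurableSpace.generateFrom piSys] s :=
      MeasurableSpace.measurableSet_generateFrom hs
    rwa [hgen] at h
  -- the key identity
  have key : ∀ s ∈ piSys, ∀ g : C(E', ℝ),
      ∫ ω in R ⁻¹' s, g (R' ω) ∂P = (P (R ⁻¹' s)).toReal * ∫ ω, g (R' ω) ∂P := by
    intro s hsmem
    have hsm := hmeas s hsmem
    by_cases h0 : P (R ⁻¹' s) = 0
    · intro g
      rw [Measure.restrict_eq_zero.mpr h0, h0]
      simp
    · have key₀ : ∀ g : C(E', ℝ), (∀ y, (1:ℝ)/2 ≤ g y) → (∀ y, g y ≤ 1) →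
          ∫ ω in R ⁻¹' s, g (R' ω) ∂P = (P (R ⁻¹' s)).toReal * ∫ ω, g (R' ω) ∂P := by
        intro g hg1 hg2
        have h1 := aux_key P ν hν Rl R'l hRl hR'l R R' hR hR' hconv g hg1 hg2 hsm
          (hbdry s hsmem)
        have hA : Tendsto (fun l => ((ν l) ((Rl l) ⁻¹' s)).toReal) atTop
            (𝓝 ((P (R ⁻¹' s)).toReal)) := by
          have := aux_key P ν hν Rl R'l hRl hR'l R R' hR hR' hconv
            (ContinuousMap.const E' (1:ℝ)) (fun y => by norm_num) (fun y => le_refl 1)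
            hsm (hbdry s hsmem)
          simpa [integral_const, measureReal_def] using this
        have h2 := hcond s hsmem h0 g
        have h3 : ∀ l, ∫ x in (Rl l) ⁻¹' s, g (R'l l x) ∂(ν l)
            = ((ν l) ((Rl l) ⁻¹' s)).toReal
              * ∫ x, g (R'l l x) ∂((ν l)[|{x | Rl l x ∈ s}]) := by
          intro l
          haveI := hν l
          have hAeq : {x | Rl l x ∈ s} = (Rl l) ⁻¹' s := rfl
          rcases eq_or_ne ((ν l) ((Rl l) ⁻¹' s)) 0 with hz | hz
          · rw [Measure.restrict_eq_zero.mpr hz, hz]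
            simp [ProbabilityTheory.cond, hAeq, Measure.restrict_eq_zero.mpr hz]
          · rw [ProbabilityTheory.cond, hAeq, integral_smul_measure, ENNReal.toReal_inv,
              smul_eq_mul, ← mul_assoc, mul_inv_cancel₀
                (ENNReal.toReal_ne_zero.mpr ⟨hz, measure_ne_top _ _⟩), one_mul]
        exact tendsto_nhds_unique h1 ((hA.mul h2).congr fun l => (h3 l).symm)
      intro g
      set c : ℝ := ‖g‖ + 1 with hc
      have hcpos : (0:ℝ) < c := by positivity
      set g₁ : C(E', ℝ) := (4 * c)⁻¹ • g + ContinuousMap.const E' (3/4) with hg₁def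
      have hg₁val : ∀ y, g₁ y = (4*c)⁻¹ * g y + 3/4 := fun y => rfl
      have habs : ∀ y, |g y| ≤ c := by
        intro y
        have := g.norm_coe_le_norm y
        rw [Real.norm_eq_abs] at this
        linarith
      have hsmall : ∀ y, |(4*c)⁻¹ * g y| ≤ 1/4 := by
        intro y
        rw [abs_mul, abs_of_nonneg (by positivity : (0:ℝ) ≤ (4*c)⁻¹)]
        calc (4*c)⁻¹ * |g y| ≤ (4*c)⁻¹ * c :=
              mul_le_mul_of_nonneg_left (habs y) (by positivity)
          _ = 1/4 := by
              field_simp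
      have hb1 : ∀ y, (1:ℝ)/2 ≤ g₁ y := by
        intro y
        have := (abs_le.mp (hsmall y)).1
        rw [hg₁val]
        linarith
      have hb2 : ∀ y, g₁ y ≤ 1 := by
        intro y
        have := (abs_le.mp (hsmall y)).2
        rw [hg₁val]
        linarith
      have e₁ := key₀ g₁ hb1 hb2
      have hintg : Integrable (fun ω => g (R' ω)) P := hint g
      have hintgr : Integrable (fun ω => g (R' ω)) (P.restrict (R ⁻¹' s)) :=
        hintg.restrict
      have expand1 : ∫ ω in R ⁻¹' s, g₁ (R' ω) ∂P
          = (4*c)⁻¹ * ∫ ω in R ⁻¹' s, g (R' ω) ∂P + 3/4 * (P (R ⁻¹' s)).toReal := by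
        simp only [hg₁val]
        rw [integral_add (hintgr.const_mul _) (integrable_const _), integral_const_mul,
          setIntegral_const, measureReal_def, smul_eq_mul]
        ring
      have expand2 : ∫ ω, g₁ (R' ω) ∂P = (4*c)⁻¹ * ∫ ω, g (R' ω) ∂P + 3/4 := by
        simp only [hg₁val]
        rw [integral_add (hintg.const_mul _) (integrable_const _), integral_const_mul,
          integral_const, measureReal_def, measure_univ, ENNReal.toReal_one, one_smul]
      rw [expand1, expand2] at e₁
      have h4c : ((4:ℝ)*c)⁻¹ ≠ 0 := by positivity
      have e₂ : (4*c)⁻¹ * (∫ ω in R ⁻¹' s, g (R' ω) ∂P)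
          = (4*c)⁻¹ * ((P (R ⁻¹' s)).toReal * ∫ ω, g (R' ω) ∂P) := by
        ring_nf at e₁ ⊢
        linarith
      exact mul_left_cancel₀ h4c e₂
  -- product formula for s in the pi-system
  have prod1 : ∀ s ∈ piSys, ∀ B : Set E', MeasurableSet B →
      P (R ⁻¹' s ∩ R' ⁻¹' B) = P (R ⁻¹' s) * P (R' ⁻¹' B) := by
    intro s hsmem B hB
    have hsm := hmeas s hsmem
    have hmeq : (P.restrict (R ⁻¹' s)).map R' = (P (R ⁻¹' s)) • P.map R' := by
      haveI : IsFiniteMeasure ((P.restrict (R ⁻¹' s)).map R') := ⟨by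
        rw [Measure.map_apply hR' MeasurableSet.univ]
        exact measure_lt_top _ _⟩
      apply ext_of_forall_lintegral_eq_of_IsFiniteMeasure
      intro f
      set gf : C(E', ℝ) := ⟨fun y => (f y : ℝ), NNReal.continuous_coe.comp f.continuous⟩
        with hgf
      have hk := key s hsmem gf
      simp only [hgf, ContinuousMap.coe_mk] at hk
      have hi1 : Integrable (fun ω => ((f (R' ω) : ℝ≥0) : ℝ)) (P.restrict (R ⁻¹' s)) :=
        (hint gf).restrict
      have hfm : Measurable fun x => ((f x : ℝ≥0) : ℝ≥0∞) :=
        f.continuous.measurable.coe_nnreal_ennreal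
      calc ∫⁻ x, f x ∂((P.restrict (R ⁻¹' s)).map R')
          = ∫⁻ ω, f (R' ω) ∂(P.restrict (R ⁻¹' s)) := lintegral_map hfm hR'
        _ = ENNReal.ofReal (∫ ω, ((f (R' ω) : ℝ≥0) : ℝ) ∂(P.restrict (R ⁻¹' s))) :=
            lintegral_coe_eq_integral _ hi1
        _ = ENNReal.ofReal ((P (R ⁻¹' s)).toReal * ∫ ω, ((f (R' ω) : ℝ≥0) : ℝ) ∂P) := by
            rw [← hk]
        _ = ENNReal.ofReal ((P (R ⁻¹' s)).toReal)
              * ENNReal.ofReal (∫ ω, ((f (R' ω) : ℝ≥0) : ℝ) ∂P) :=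
            ENNReal.ofReal_mul ENNReal.toReal_nonneg
        _ = (P (R ⁻¹' s)) * ∫⁻ ω, f (R' ω) ∂P := by
            rw [ENNReal.ofReal_toReal (measure_ne_top _ _),
              ← lintegral_coe_eq_integral _ (hint gf)]
        _ = ∫⁻ x, f x ∂((P (R ⁻¹' s)) • P.map R') := by
            rw [lintegral_smul_measure, lintegral_map hfm hR', smul_eq_mul]
    calc P (R ⁻¹' s ∩ R' ⁻¹' B)
        = (P.restrict (R ⁻¹' s)).map R' B := by
          rw [Measure.map_apply hR' hB, Measure.restrict_apply (hR' hB), Set.inter_comm]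
      _ = ((P (R ⁻¹' s)) • P.map R') B := by rw [hmeq]
      _ = P (R ⁻¹' s) * P (R' ⁻¹' B) := by
          rw [Measure.smul_apply, Measure.map_apply hR' hB, smul_eq_mul]
  -- extend to all measurable sets via the pi-system
  rw [indepFun_iff_measure_inter_preimage_eq_mul]
  intro s B hsm hB
  have hmeq2 : (P.restrict (R' ⁻¹' B)).map R = (P (R' ⁻¹' B)) • P.map R := by
    haveI : IsFiniteMeasure ((P.restrict (R' ⁻¹' B)).map R) := ⟨by
      rw [Measure.map_apply hR MeasurableSet.univ]
      exact measure_lt_top _ _⟩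
    refine ext_of_generate_finite piSys hgen.symm hπ ?_ ?_
    · intro t htmem
      have htm := hmeas t htmem
      rw [Measure.map_apply hR htm, Measure.restrict_apply (hR htm),
        Measure.smul_apply, Measure.map_apply hR htm, smul_eq_mul,
        prod1 t htmem B hB, mul_comm]
    · rw [Measure.map_apply hR MeasurableSet.univ, preimage_univ,
        Measure.restrict_apply_univ, Measure.smul_apply,
        Measure.map_apply hR MeasurableSet.univ, preimage_univ, measure_univ,
        smul_eq_mul, mul_one]
  calc P (R ⁻¹' s ∩ R' ⁻¹' B)
      = (P.restrict (R' ⁻¹' B)).map R s := by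
        rw [Measure.map_apply hR hsm, Measure.restrict_apply (hR hsm)]
    _ = ((P (R' ⁻¹' B)) • P.map R) s := by rw [hmeq2]
    _ = P (R ⁻¹' s) * P (R' ⁻¹' B) := by
        rw [Measure.smul_apply, Measure.map_apply hR hsm, smul_eq_mul, mul_comm]
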